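/- Resolvent power bound for E = 1: let E be a self-adjoint strictly positive definite bounded operator on a Hilbert space H (E ≥ d > 0) and A skew-selfadjoint (A* = -A). Then for all λ > 0 and n ∈ ℕ, ‖((λE+A)^{-1}E)^n‖ ≤ ‖√E‖·‖√(E^{-1})‖ / λ^n. In particular (λE+A)^{-1} exists for λ > 0 and the stated bound holds via the identity ((λE+A)^{-1}E)^n = √(E^{-1}) (λ + √(E^{-1})A√(E^{-1}))^{-n} √E. -/

import Mathlib

open MeasureTheory

local notation "⟪" x ", " y "⟫" => @inner ℂ _ _ x y

set_option maxHeartbeats 2000000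
set_option synthInstance.maxHeartbeats 1000000

open ContinuousLinearMap in
lemma sqrt_inverse_cancel' {H : Type*} [NormedAddCommGroup H] [InnerProductSpace ℂ H] [CompleteSpace H]
    (E Einv Es Fs : H →L[ℂ] H)
    (hEinv1 : E * Einv = 1) (hEinv2 : Einv * E = 1)
    (hEssa : IsSelfAdjoint Es) (hEs2 : Es * Es = E)
    (hEspos : ∀ x : H, 0 ≤ (⟪Es x, x⟫ : ℂ).re)
    (hFssa : IsSelfAdjoint Fs) (hFs2 : Fs * Fs = Einv)
    (hFspos : ∀ x : H, 0 ≤ (⟪Fs x, x⟫ : ℂ).re) :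
    Fs * Es = 1 ∧ Es * Fs = 1 := by
  have hEsP : Es.IsPositive := ⟨hEssa.isSymmetric, fun x => hEspos x⟩
  have hFsP : Fs.IsPositive := ⟨hFssa.isSymmetric, fun x => hFspos x⟩
  have h1 : Fs * Einv = Einv * Fs := by rw [← hFs2, mul_assoc]
  have hFsE : Fs * E = E * Fs := by
    calc Fs * E = E * Einv * (Fs * E) := by rw [hEinv1, one_mul]
      _ = E * (Einv * Fs) * E := by noncomm_ring
      _ = E * (Fs * Einv) * E := by rw [h1]
      _ = E * Fs * (Einv * E) := by noncomm_ring
      _ = E * Fs := by rw [hEinv2, mul_one]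
  have hFEF : Fs * E * Fs = 1 := by
    rw [hFsE, mul_assoc, hFs2, hEinv1]
  have hVP : (Es * Fs * Es).IsPositive := by
    have := hFsP.conj_adjoint Es
    rwa [← ContinuousLinearMap.star_eq_adjoint, hEssa.star_eq] at this
  have hV2 : (Es * Fs * Es) * (Es * Fs * Es) = E := by
    calc (Es * Fs * Es) * (Es * Fs * Es) = Es * (Fs * (Es * Es) * Fs) * Es := by noncomm_ring
      _ = Es * (Fs * E * Fs) * Es := by rw [hEs2]
      _ = Es * Es := by rw [hFEF, mul_one]
      _ = E := hEs2
  have hEs0 : (0:H →L[ℂ] H) ≤ Es := (ContinuousLinearMap.nonneg_iff_isPositive Es).mpr hEsP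
  have hV0 : (0:H →L[ℂ] H) ≤ Es * Fs * Es := (ContinuousLinearMap.nonneg_iff_isPositive _).mpr hVP
  have hVEs : Es * Fs * Es = Es := by
    have e1 : CFC.sqrt ((Es * Fs * Es) ^ 2) = Es * Fs * Es := CFC.sqrt_sq _ hV0
    have e2 : CFC.sqrt (Es ^ 2) = Es := CFC.sqrt_sq _ hEs0
    rw [sq, hV2] at e1
    rw [sq, hEs2] at e2
    rw [← e1, e2]
  constructor
  · calc Fs * Es = Einv * (Es * Es) * (Fs * Es) := by rw [hEs2, hEinv2, one_mul]
      _ = Einv * Es * (Es * Fs * Es) := by noncomm_ring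
      _ = Einv * Es * Es := by rw [hVEs]
      _ = Einv * (Es * Es) := by noncomm_ring
      _ = 1 := by rw [hEs2, hEinv2]
  · calc Es * Fs = (Es * Fs) * ((Es * Es) * Einv) := by rw [hEs2, hEinv1, mul_one]
      _ = (Es * Fs * Es) * (Es * Einv) := by noncomm_ring
      _ = Es * (Es * Einv) := by rw [hVEs]
      _ = (Es * Es) * Einv := by noncomm_ring
      _ = 1 := by rw [hEs2, hEinv1]


/-- Resolvent power bound: let `E` be a bounded selfadjoint operator on a Hilbert space `H`
with `E ≥ d > 0` (so `E` is boundedly invertible with inverse `Einv`, and `Es = √E`,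
`Fs = √(E⁻¹)` are the positive selfadjoint square roots), and let `A` be densely defined
and skew-selfadjoint (`A* = -A`).  Then for every `λ > 0` the operator `λE + A` has a
bounded inverse `R`, and `‖((λE+A)^{-1}E)^n‖ ≤ ‖√E‖·‖√(E⁻¹)‖/λ^n` for all `n ∈ ℕ`. -/
theorem resolvent_power_bound
    {H : Type*} [NormedAddCommGroup H] [InnerProductSpace ℂ H] [CompleteSpace H]
    (E Einv Es Fs : H →L[ℂ] H) (d : ℝ) (hd : 0 < d)
    (hEsa : IsSelfAdjoint E) (hEpos : ∀ x : H, d * ‖x‖ ^ 2 ≤ (⟪E x, x⟫ : ℂ).re)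
    (hEinv1 : E.comp Einv = ContinuousLinearMap.id ℂ H)
    (hEinv2 : Einv.comp E = ContinuousLinearMap.id ℂ H)
    (hEssa : IsSelfAdjoint Es) (hEs2 : Es.comp Es = E)
    (hEspos : ∀ x : H, 0 ≤ (⟪Es x, x⟫ : ℂ).re)
    (hFssa : IsSelfAdjoint Fs) (hFs2 : Fs.comp Fs = Einv)
    (hFspos : ∀ x : H, 0 ≤ (⟪Fs x, x⟫ : ℂ).re)
    (A : H →ₗ.[ℂ] H) (hAdense : Dense (A.domain : Set H)) (hskew : A.adjoint = -A) :
    ∀ l : ℝ, 0 < l → ∃ R : H →L[ℂ] H,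
      (∀ (x : H) (hx : x ∈ A.domain), R ((l : ℂ) • E x + A ⟨x, hx⟩) = x) ∧
      (∀ y : H, ∃ hy : R y ∈ A.domain, (l : ℂ) • E (R y) + A ⟨R y, hy⟩ = y) ∧
      ∀ n : ℕ, ‖(R.comp E) ^ n‖ ≤ ‖Es‖ * ‖Fs‖ / l ^ n := by
  intro l hl
  have hld : (0:ℝ) < l * d := mul_pos hl hd
  -- symmetry facts
  have hEsym : ∀ x y : H, ⟪E x, y⟫ = ⟪x, E y⟫ := fun x y =>
    hEsa.isSymmetric x y
  have hEssym : ∀ x y : H, ⟪Es x, y⟫ = ⟪x, Es y⟫ := fun x y =>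
    hEssa.isSymmetric x y
  -- unpack skew-adjointness
  obtain ⟨hdom, happly⟩ := LinearPMap.ext_iff.mp hskew
  have hdom' : A.adjoint.domain = A.domain := hdom
  have hA' : ∀ (u : A.adjoint.domain) (hx : (u:H) ∈ A.domain),
      A.adjoint u = -(A ⟨u, hx⟩) := by
    intro u hx
    have h1 : A.adjoint u = (-A) ⟨(u:H), hx⟩ := @happly u u.2 hx
    rw [h1, LinearPMap.neg_apply]
  have formal := LinearPMap.adjoint_isFormalAdjoint hAdense
  have hAanti : ∀ (x y : A.domain), ⟪(A x : H), (y:H)⟫ = -⟪(x:H), (A y : H)⟫ := by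
    intro x y
    have hx' : (x:H) ∈ A.adjoint.domain := by rw [hdom']; exact x.2
    have h2 := formal ⟨(x:H), hx'⟩ y
    rw [hA' ⟨(x:H), hx'⟩ x.2] at h2
    have h3 : (⟨(x:H), x.2⟩ : A.domain) = x := Subtype.ext rfl
    rw [h3] at h2
    rw [inner_neg_left] at h2
    linear_combination -h2
  have hAre : ∀ x : A.domain, (⟪(A x : H), (x:H)⟫ : ℂ).re = 0 := by
    intro x
    have h1 := hAanti x x
    have h2 : ⟪(x:H), (A x : H)⟫ = (starRingEnd ℂ) ⟪(A x : H), (x:H)⟫ :=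
      (inner_conj_symm _ _).symm
    rw [h2] at h1
    have := congrArg Complex.re h1
    simp only [Complex.neg_re, Complex.conj_re] at this
    linarith
  -- the operator T = l•E + A on A.domain
  set Tl : A.domain →ₗ[ℂ] H :=
    (l:ℂ) • (E.toLinearMap ∘ₗ A.domain.subtype) + A.toFun with hTldef
  have hTlapp : ∀ x : A.domain, Tl x = (l:ℂ) • E (x:H) + A x := fun x => rfl
  -- coercivity
  have hcoer : ∀ x : A.domain, l * (d * ‖(x:H)‖^2) ≤ (⟪Tl x, (x:H)⟫ : ℂ).re := by
    intro x
    rw [hTlapp, inner_add_left, inner_smul_left]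
    have hconj : (starRingEnd ℂ) ((l:ℝ):ℂ) = ((l:ℝ):ℂ) := Complex.conj_ofReal l
    rw [hconj]
    rw [Complex.add_re, Complex.re_ofReal_mul, hAre x, add_zero]
    exact mul_le_mul_of_nonneg_left (hEpos _) hl.le
  have hTnorm : ∀ x : A.domain, l * d * ‖(x:H)‖ ≤ ‖Tl x‖ := by
    intro x
    rcases eq_or_lt_of_le (norm_nonneg (x:H)) with h0 | h0
    · rw [← h0, mul_zero]; exact norm_nonneg _
    · have h1 := hcoer x
      have h2 : (⟪Tl x, (x:H)⟫ : ℂ).re ≤ ‖Tl x‖ * ‖(x:H)‖ := by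
        calc (⟪Tl x, (x:H)⟫ : ℂ).re ≤ ‖⟪Tl x, (x:H)⟫‖ := Complex.re_le_norm _
          _ = ‖⟪Tl x, (x:H)⟫‖ := rfl
          _ ≤ ‖Tl x‖ * ‖(x:H)‖ := norm_inner_le_norm _ _
      have h3 : l * d * ‖(x:H)‖ * ‖(x:H)‖ ≤ ‖Tl x‖ * ‖(x:H)‖ := by nlinarith
      exact le_of_mul_le_mul_right h3 h0
  -- injectivity
  have hTinj : Function.Injective Tl := by
    intro x y hxy
    have h1 : Tl (x - y) = 0 := by rw [map_sub, hxy, sub_self]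
    have h2 := hTnorm (x - y)
    rw [h1, norm_zero] at h2
    have h3 : ‖((x:H) - (y:H))‖ ≤ 0 := by
      have : (((x - y : A.domain)):H) = (x:H) - (y:H) := rfl
      rw [this] at h2
      nlinarith [norm_nonneg ((x:H) - (y:H))]
    have h4 : (x:H) - (y:H) = 0 := by
      rw [← norm_le_zero_iff]; exact h3
    exact Subtype.ext (sub_eq_zero.mp h4)
  -- closed range
  set M : Submodule ℂ H := LinearMap.range Tl with hMdef
  have hMclosed : IsClosed (M : Set H) := by
    apply IsSeqClosed.isClosed
    intro yseq yy hyin hyy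
    choose xseq hxseq using hyin
    have hxCauchy : CauchySeq (fun n => ((xseq n : H))) := by
      rw [Metric.cauchySeq_iff]
      intro ε hε
      have hyC : CauchySeq yseq := hyy.cauchySeq
      rw [Metric.cauchySeq_iff] at hyC
      obtain ⟨N, hN⟩ := hyC (ε * (l * d)) (mul_pos hε hld)
      refine ⟨N, fun m hm n hn => ?_⟩
      have h1 := hTnorm (xseq m - xseq n)
      have he : Tl (xseq m - xseq n) = yseq m - yseq n := by
        rw [map_sub, hxseq, hxseq]
      rw [he] at h1
      have h2 : dist (yseq m) (yseq n) < ε * (l * d) := hN m hm n hn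
      rw [dist_eq_norm] at h2
      rw [dist_eq_norm]
      have h3 : (((xseq m - xseq n : A.domain)):H) = (xseq m : H) - (xseq n : H) := rfl
      rw [h3] at h1
      nlinarith
    obtain ⟨xx, hxx⟩ := cauchySeq_tendsto_of_complete hxCauchy
    set z : H := yy - (l:ℂ) • E xx with hz
    have hAten : Filter.Tendsto (fun n => (A (xseq n) : H)) Filter.atTop (nhds z) := by
      have h1 : ∀ n, (A (xseq n) : H) = yseq n - (l:ℂ) • E (xseq n : H) := by
        intro n
        exact eq_sub_of_add_eq' ((hTlapp (xseq n)).symm.trans (hxseq n))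
      simp only [h1]
      have hE : Filter.Tendsto (fun n => E ((xseq n : H))) Filter.atTop (nhds (E xx)) :=
        (E.continuous.tendsto xx).comp hxx
      exact hyy.sub (hE.const_smul ((l:ℝ):ℂ))
    have hkey : ∀ u : A.domain, ⟪-z, (u:H)⟫ = ⟪xx, (A u : H)⟫ := by
      intro u
      have t1 : Filter.Tendsto (fun n => ⟪((xseq n : H)), (A u : H)⟫)
          Filter.atTop (nhds ⟪xx, (A u : H)⟫) :=
        hxx.inner tendsto_const_nhds
      have t2 : Filter.Tendsto (fun n => ⟪((xseq n : H)), (A u : H)⟫)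
          Filter.atTop (nhds (-⟪z, (u:H)⟫)) := by
        have h2 : ∀ n, ⟪((xseq n : H)), (A u : H)⟫ = -⟪(A (xseq n) : H), (u:H)⟫ := by
          intro n
          have := hAanti (xseq n) u
          linear_combination this
        simp only [h2]
        exact (hAten.inner tendsto_const_nhds).neg
      have := tendsto_nhds_unique t1 t2
      rw [this, inner_neg_left]
    have hmemadj : xx ∈ A.adjoint.domain :=
      LinearPMap.mem_adjoint_domain_of_exists _ ⟨-z, fun u => hkey u⟩
    have hval : A.adjoint ⟨xx, hmemadj⟩ = -z :=
      LinearPMap.adjoint_apply_eq hAdense ⟨xx, hmemadj⟩ (fun u => hkey u)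
    have hmem : xx ∈ A.domain := hdom' ▸ hmemadj
    have hAxx : A ⟨xx, hmem⟩ = z := by
      have h9 : -(A ⟨xx, hmem⟩) = -z := (hA' ⟨xx, hmemadj⟩ hmem).symm.trans hval
      exact neg_injective h9
    refine ⟨⟨xx, hmem⟩, ?_⟩
    rw [hTlapp, hAxx, hz]
    abel
  -- surjectivity
  have : CompleteSpace M := hMclosed.completeSpace_coe
  have hMtop : M = ⊤ := by
    rw [← Submodule.orthogonal_eq_bot_iff]
    rw [Submodule.eq_bot_iff]
    intro v hv
    rw [Submodule.mem_orthogonal] at hv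
    have hv' : ∀ x : A.domain, ⟪Tl x, v⟫ = 0 := fun x => hv _ ⟨x, rfl⟩
    have hkey : ∀ x : A.domain, ⟪-((l:ℂ) • E v), (x:H)⟫ = ⟪v, (A x : H)⟫ := by
      intro x
      have h1 := hv' x
      rw [hTlapp, inner_add_left, inner_smul_left, Complex.conj_ofReal] at h1
      -- h1 : l * ⟪E x, v⟫ + ⟪A x, v⟫ = 0
      have h2 : ⟪(A x : H), v⟫ = -(((l:ℝ):ℂ) * ⟪(x:H), E v⟫) := by
        rw [← hEsym]
        linear_combination h1
      have h3 := congrArg (starRingEnd ℂ) h2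
      rw [inner_conj_symm] at h3
      rw [h3]
      rw [inner_neg_left, inner_smul_left, Complex.conj_ofReal]
      rw [map_neg, map_mul, Complex.conj_ofReal, inner_conj_symm]
    have hvadj : v ∈ A.adjoint.domain :=
      LinearPMap.mem_adjoint_domain_of_exists _ ⟨-((l:ℂ) • E v), fun u => hkey u⟩
    have hval : A.adjoint ⟨v, hvadj⟩ = -((l:ℂ) • E v) :=
      LinearPMap.adjoint_apply_eq hAdense ⟨v, hvadj⟩ (fun u => hkey u)
    have hvmem : v ∈ A.domain := hdom' ▸ hvadj
    have hAv : A ⟨v, hvmem⟩ = (l:ℂ) • E v := by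
      have := hA' ⟨v, hvadj⟩ hvmem
      rw [hval] at this
      exact neg_injective this.symm
    have h0 : (⟪Tl ⟨v, hvmem⟩, v⟫ : ℂ) = 0 := hv' ⟨v, hvmem⟩
    have h1 := hcoer ⟨v, hvmem⟩
    rw [h0] at h1
    have h1' : l * (d * ‖v‖^2) ≤ (0:ℝ) := by simpa using h1
    have h2 : ‖v‖ = 0 := by
      by_contra hne
      have hpos : 0 < ‖v‖ := lt_of_le_of_ne (norm_nonneg v) (Ne.symm hne)
      have hpos2 : 0 < l * (d * ‖v‖^2) := by positivity
      linarith
    exact norm_eq_zero.mp h2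
  have hTsurj : Function.Surjective Tl := by
    rw [← LinearMap.range_eq_top, ← hMdef]
    exact hMtop
  let e : A.domain ≃ₗ[ℂ] H := LinearEquiv.ofBijective Tl ⟨hTinj, hTsurj⟩
  have hTR : ∀ y : H, Tl (e.symm y) = y := fun y => e.apply_symm_apply y
  have hRT : ∀ x : A.domain, e.symm (Tl x) = x := e.symm_apply_apply
  let R0 : H →ₗ[ℂ] H := A.domain.subtype ∘ₗ (e.symm : H →ₗ[ℂ] A.domain)
  have hR0 : ∀ y, R0 y = ((e.symm y : A.domain) : H) := fun y => rfl
  have hR0bound : ∀ y, ‖R0 y‖ ≤ (l*d)⁻¹ * ‖y‖ := by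
    intro y
    have h1 := hTnorm (e.symm y)
    rw [hTR] at h1
    rw [hR0]
    rw [inv_mul_eq_div, le_div_iff₀ hld]
    nlinarith
  let R : H →L[ℂ] H := R0.mkContinuous ((l*d)⁻¹) hR0bound
  have hRapp : ∀ y, R y = ((e.symm y : A.domain) : H) := fun y => rfl
  refine ⟨R, ?_, ?_, ?_⟩
  · intro x hx
    have h1 : ((l:ℝ):ℂ) • E x + A ⟨x, hx⟩ = Tl ⟨x, hx⟩ := (hTlapp ⟨x, hx⟩).symm
    rw [h1, hRapp, hRT]
  · intro y
    refine ⟨(e.symm y).2, ?_⟩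
    have h1 : (⟨R y, (e.symm y).2⟩ : A.domain) = e.symm y := Subtype.ext (hRapp y)
    rw [h1]
    have h2 : R y = ((e.symm y : A.domain) : H) := hRapp y
    rw [h2]
    exact (hTlapp (e.symm y)).symm.trans (hTR y)
  · -- norm bound
    have hmul1 : E * Einv = 1 := hEinv1
    have hmul2 : Einv * E = 1 := hEinv2
    obtain ⟨hFsEs, hEsFs⟩ := sqrt_inverse_cancel' E Einv Es Fs hmul1 hmul2
      hEssa hEs2 hEspos hFssa hFs2 hFspos
    set S : H →L[ℂ] H := Es * R * Es with hSdef
    have hSapp : ∀ y, S y = Es (R (Es y)) := fun y => rfl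
    have hSbound : ∀ y, ‖S y‖ ≤ l⁻¹ * ‖y‖ := by
      intro y
      set u : A.domain := e.symm (Es y) with hu
      have hTu : Tl u = Es y := hTR _
      have hEEs : ∀ w : H, E w = Es (Es w) := by
        intro w
        have := congrArg (fun (T : H →L[ℂ] H) => T w) hEs2
        exact this.symm
      have h1 : (⟪Tl u, (u:H)⟫ : ℂ).re = l * ‖Es (u:H)‖^2 := by
        rw [hTlapp, inner_add_left, inner_smul_left, Complex.conj_ofReal]
        rw [Complex.add_re, Complex.re_ofReal_mul, hAre u, add_zero]
        congr 1
        rw [hEEs, hEssym]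
        rw [← inner_self_eq_norm_sq (𝕜 := ℂ)]
        rfl
      have h2 : (⟪Tl u, (u:H)⟫ : ℂ).re ≤ ‖y‖ * ‖Es (u:H)‖ := by
        rw [hTu, hEssym]
        calc (⟪y, Es (u:H)⟫ : ℂ).re ≤ ‖(⟪y, Es (u:H)⟫ : ℂ)‖ := Complex.re_le_norm _
          _ = ‖(⟪y, Es (u:H)⟫ : ℂ)‖ := rfl
          _ ≤ ‖y‖ * ‖Es (u:H)‖ := norm_inner_le_norm _ _
      have h3 : S y = Es (u:H) := by rw [hSapp, hRapp]
      rw [h3]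
      rcases eq_or_lt_of_le (norm_nonneg (Es (u:H))) with h0 | h0
      · rw [← h0]
        positivity
      · rw [inv_mul_eq_div, le_div_iff₀ hl]
        have h4 : l * ‖Es (u:H)‖^2 ≤ ‖y‖ * ‖Es (u:H)‖ := h1 ▸ h2
        have h5 : (‖Es (u:H)‖ * l) * ‖Es (u:H)‖ ≤ ‖y‖ * ‖Es (u:H)‖ := by nlinarith
        exact le_of_mul_le_mul_right h5 h0
    have hSnorm : ‖S‖ ≤ l⁻¹ :=
      ContinuousLinearMap.opNorm_le_bound S (inv_nonneg.mpr hl.le) hSbound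
    have hSpow : ∀ n : ℕ, ‖S^n‖ ≤ (l⁻¹)^n := by
      intro n
      induction n with
      | zero => rw [pow_zero, pow_zero]; exact ContinuousLinearMap.norm_id_le
      | succ n ih =>
        rw [pow_succ, pow_succ]
        calc ‖S^n * S‖ ≤ ‖S^n‖ * ‖S‖ := norm_mul_le _ _
          _ ≤ (l⁻¹)^n * l⁻¹ := mul_le_mul ih hSnorm (norm_nonneg _) (by positivity)
    have hcompmul : R.comp E = R * E := rfl
    have hEs2mul : Es * Es = E := hEs2
    have hiter : ∀ n : ℕ, (R.comp E)^n = Fs * S^n * Es := by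
      intro n
      induction n with
      | zero => rw [pow_zero, pow_zero, mul_one, hFsEs]
      | succ n ih =>
        rw [pow_succ, ih, pow_succ, hcompmul]
        calc Fs * S^n * Es * (R * E) = Fs * S^n * (Es * R * (Es * Es)) := by
              rw [hEs2mul]; noncomm_ring
          _ = Fs * (S^n * S) * Es := by rw [hSdef]; noncomm_ring
    intro n
    rw [hiter n]
    calc ‖Fs * S^n * Es‖ ≤ ‖Fs * S^n‖ * ‖Es‖ := norm_mul_le _ _
      _ ≤ (‖Fs‖ * ‖S^n‖) * ‖Es‖ :=
          mul_le_mul_of_nonneg_right (norm_mul_le _ _) (norm_nonneg _)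
      _ ≤ (‖Fs‖ * (l⁻¹)^n) * ‖Es‖ := by
          have := hSpow n
          gcongr
      _ = ‖Es‖ * ‖Fs‖ / l^n := by
          rw [inv_pow]
          field_simp
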